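/- Let A = (a_{ij}) be a skew-symmetric matrix indexed by V over a field of characteristic ≠ 2, let X be a nontrivial HL-clan of A, and define B = (b_{ij}) by b_{ij} = −a_{ij} if both i,j ∈ X, and b_{ij} = a_{ij} otherwise. Then det(A[Y]) = det(B[Y]) for every subset Y of V. -/

import Mathlib

open Matrix

/-- Principal minor of `M` indexed by the finite set `X`. -/
noncomputable def pminor {W K : Type*} [DecidableEq W] [Field K]
    (M : Matrix W W K) (X : Finset W) : K :=
  (M.submatrix (fun i : {a // a ∈ X} => (i : W)) (fun j : {a // a ∈ X} => (j : W))).det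

/-- `X` is an HL-clan of `A`: both `A[X, V\X]` and `A[V\X, X]` have rank at most 1. -/
def IsHLClan {V K : Type*} [Fintype V] [DecidableEq V] [Field K]
    (A : Matrix V V K) (X : Finset V) : Prop :=
  (A.submatrix (fun i : {a // a ∈ X} => (i : V)) (fun j : {a // a ∈ Xᶜ} => (j : V))).rank ≤ 1 ∧
  (A.submatrix (fun i : {a // a ∈ Xᶜ} => (i : V)) (fun j : {a // a ∈ X} => (j : V))).rank ≤ 1

open Polynomial

section Aux

/-- quadratic form of a skew matrix vanishes (char ≠ 2) -/
lemma skew_quad_zero {m K : Type*} [Fintype m] [Field K] (hchar : (2 : K) ≠ 0)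
    (N : Matrix m m K) (hN : Nᵀ = -N) (u : m → K) : u ⬝ᵥ N *ᵥ u = 0 := by
  have h1 : u ⬝ᵥ N *ᵥ u = u ᵥ* N ⬝ᵥ u := (Matrix.dotProduct_mulVec u N u)
  have h2 : u ᵥ* N = -(N *ᵥ u) := by
    have := Matrix.mulVec_transpose N u
    rw [hN] at this
    simpa [Matrix.neg_mulVec] using this.symm
  have h3 : u ⬝ᵥ N *ᵥ u = -(u ⬝ᵥ N *ᵥ u) := by
    conv_lhs => rw [h1, h2, neg_dotProduct, dotProduct_comm (N *ᵥ u) u]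
  have h4 : 2 * (u ⬝ᵥ N *ᵥ u) = 0 := by linear_combination h3
  rcases mul_eq_zero.mp h4 with h | h
  · exact absurd h hchar
  · exact h

lemma skew_det_zero_of_odd {m K : Type*} [Fintype m] [DecidableEq m] [Field K]
    (hchar : (2 : K) ≠ 0) (N : Matrix m m K) (hN : Nᵀ = -N) (hodd : Odd (Fintype.card m)) :
    N.det = 0 := by
  have h : N.det = -N.det := by
    conv_lhs => rw [← Matrix.det_transpose, hN, Matrix.det_neg, hodd.neg_one_pow]
    ring
  have h4 : 2 * N.det = 0 := by linear_combination h
  rcases mul_eq_zero.mp h4 with h | h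
  · exact absurd h hchar
  · exact h

lemma rank_le_one_exists {m n K : Type*} [Fintype m] [Fintype n] [DecidableEq n] [Field K]
    (M : Matrix m n K) (h : M.rank ≤ 1) :
    ∃ (u : m → K) (v : n → K), ∀ i j, M i j = u i * v j := by
  classical
  rw [Matrix.rank] at h
  obtain ⟨w₀, hw₀⟩ := finrank_le_one_iff.mp h
  refine ⟨fun i => (w₀ : m → K) i, fun j => Classical.choose (hw₀ ⟨M.mulVecLin (Pi.single j 1),
    LinearMap.mem_range_self _ _⟩), fun i j => ?_⟩
  have hc := Classical.choose_spec (hw₀ ⟨M.mulVecLin (Pi.single j 1),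
    LinearMap.mem_range_self _ _⟩)
  have := congrFun (congrArg (Subtype.val) hc) i
  simp only [Submodule.coe_smul, Pi.smul_apply, smul_eq_mul] at this
  have h2 : M.mulVecLin (Pi.single j 1) i = M i j := by
    simp [Matrix.mulVecLin_apply, Matrix.mulVec_single]
  rw [h2] at this
  rw [← this]; ring

lemma map_vecMulVec {a b R S : Type*} [NonAssocSemiring R] [NonAssocSemiring S]
    (f : R →+* S) (p : a → R) (q : b → R) :
    (vecMulVec p q).map f = vecMulVec (f ∘ p) (f ∘ q) := by
  ext i j
  simp [vecMulVec_apply, Matrix.map_apply]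

lemma det_map' {a R S : Type*} [Fintype a] [DecidableEq a] [CommRing R] [CommRing S]
    (f : R →+* S) (M : Matrix a a R) : (M.map f).det = f M.det := by
  rw [f.map_det, RingHom.mapMatrix_apply]

lemma scalar_map_helper {m R S : Type*} [Fintype m] [DecidableEq m]
    [CommRing R] [CommRing S] (f : R →+* S) (M : Matrix m m R) (p : m → R) (q : m → R) :
    f (q ⬝ᵥ adjugate M *ᵥ p) = (f ∘ q) ⬝ᵥ adjugate (M.map f) *ᵥ (f ∘ p) := by
  rw [RingHom.map_dotProduct]
  congr 1
  funext i
  rw [show (f ∘ (adjugate M *ᵥ p)) i = f ((adjugate M *ᵥ p) i) from rfl,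
    RingHom.map_mulVec]
  rw [show (adjugate M).map f = f.mapMatrix (adjugate M) from rfl, RingHom.map_adjugate,
    RingHom.mapMatrix_apply]

section UnitCase

lemma det_add_vecMulVec_of_isUnit {m F : Type*} [Fintype m] [DecidableEq m] [Field F]
    (A : Matrix m m F) (hA : IsUnit A.det) (u v : m → F) :
    (A + vecMulVec u v).det = A.det + v ⬝ᵥ adjugate A *ᵥ u := by
  rw [vecMulVec_eq Unit, Matrix.det_add_replicateCol_mul_replicateRow hA]
  have h1 : (1 + replicateRow Unit v * A⁻¹ * replicateCol Unit u).det = 1 + v ⬝ᵥ A⁻¹ *ᵥ u := by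
    rw [det_unique]
    simp only [Matrix.mul_apply, Matrix.add_apply, Matrix.one_apply_eq, Matrix.replicateRow_apply,
      Matrix.replicateCol_apply, dotProduct, Matrix.mulVec, Finset.univ_unique, Finset.sum_singleton]
    congr 1
    simp only [Finset.sum_mul, Finset.mul_sum]
    rw [Finset.sum_comm]
    apply Finset.sum_congr rfl; intros; apply Finset.sum_congr rfl; intros; ring
  rw [h1]
  have hd : A.det ≠ 0 := hA.ne_zero
  have h2 : A⁻¹ = (A.det)⁻¹ • adjugate A := by rw [Matrix.inv_def, Ring.inverse_eq_inv]
  rw [h2]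
  rw [Matrix.smul_mulVec, dotProduct_smul, smul_eq_mul]
  field_simp

lemma vecMulVec_mul_vecMulVec {m n F : Type*} [Fintype m] [Fintype n] [Field F]
    (w : n → F) (x : m → F) (M : Matrix m m F) (u : m → F) (v : n → F) :
    vecMulVec w x * M * vecMulVec u v = (x ⬝ᵥ M *ᵥ u) • vecMulVec w v := by
  ext k l
  simp only [Matrix.mul_apply, vecMulVec_apply, Matrix.smul_apply, smul_eq_mul,
    dotProduct, Matrix.mulVec, Finset.sum_mul, Finset.mul_sum]
  rw [Finset.sum_comm]
  apply Finset.sum_congr rfl; intros; apply Finset.sum_congr rfl; intros; ring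

lemma det_fromBlocks_rankOne_of_isUnit {m n F : Type*} [Fintype m] [DecidableEq m]
    [Fintype n] [DecidableEq n] [Field F]
    (S : Matrix m m F) (T : Matrix n n F) (u x : m → F) (v w : n → F)
    (hS : IsUnit S.det) (hT : IsUnit T.det) :
    (fromBlocks S (vecMulVec u v) (vecMulVec w x) T).det
      = S.det * T.det - (x ⬝ᵥ adjugate S *ᵥ u) * (v ⬝ᵥ adjugate T *ᵥ w) := by
  have : Invertible S := S.invertibleOfIsUnitDet hS
  rw [Matrix.det_fromBlocks₁₁]
  have hinv : (⅟S : Matrix m m F) = S⁻¹ := invOf_eq_nonsing_inv S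
  have hc : vecMulVec w x * ⅟S * vecMulVec u v = (x ⬝ᵥ S⁻¹ *ᵥ u) • vecMulVec w v := by
    rw [hinv, _root_.vecMulVec_mul_vecMulVec]
  rw [hc]
  have hrw : T - (x ⬝ᵥ S⁻¹ *ᵥ u) • vecMulVec w v
      = T + vecMulVec ((-(x ⬝ᵥ S⁻¹ *ᵥ u)) • w) v := by
    ext i j
    simp [vecMulVec_apply, Matrix.sub_apply, Matrix.add_apply, Matrix.smul_apply]
    ring
  rw [hrw, det_add_vecMulVec_of_isUnit T hT]
  have hSd : S.det ≠ 0 := hS.ne_zero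
  have hadj : S.det * (x ⬝ᵥ S⁻¹ *ᵥ u) = x ⬝ᵥ adjugate S *ᵥ u := by
    rw [Matrix.inv_def, Ring.inverse_eq_inv, Matrix.smul_mulVec, dotProduct_smul, smul_eq_mul]
    field_simp
  have hmv : v ⬝ᵥ adjugate T *ᵥ ((-(x ⬝ᵥ S⁻¹ *ᵥ u)) • w)
      = -(x ⬝ᵥ S⁻¹ *ᵥ u) * (v ⬝ᵥ adjugate T *ᵥ w) := by
    rw [Matrix.mulVec_smul, dotProduct_smul]; simp
  rw [hmv]
  rw [mul_add]
  rw [show S.det * (-(x ⬝ᵥ S⁻¹ *ᵥ u) * (v ⬝ᵥ adjugate T *ᵥ w))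
      = -((S.det * (x ⬝ᵥ S⁻¹ *ᵥ u)) * (v ⬝ᵥ adjugate T *ᵥ w)) by ring, hadj]
  ring

end UnitCase

lemma det_fromBlocks_rankOne {m n K : Type*} [Fintype m] [DecidableEq m]
    [Fintype n] [DecidableEq n] [Field K]
    (S : Matrix m m K) (T : Matrix n n K) (u x : m → K) (v w : n → K) :
    (fromBlocks S (vecMulVec u v) (vecMulVec w x) T).det
      = S.det * T.det - (x ⬝ᵥ adjugate S *ᵥ u) * (v ⬝ᵥ adjugate T *ᵥ w) := by
  classical
  let φ : Polynomial K →+* FractionRing (Polynomial K) :=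
    algebraMap (Polynomial K) (FractionRing (Polynomial K))
  let ψ : K →+* Polynomial K := Polynomial.C
  have hS₁ : (charmatrix (-S)).det ≠ 0 := (Matrix.charpoly_monic (-S)).ne_zero
  have hT₁ : (charmatrix (-T)).det ≠ 0 := (Matrix.charpoly_monic (-T)).ne_zero
  have hinj : Function.Injective φ :=
    IsFractionRing.injective (Polynomial K) (FractionRing (Polynomial K))
  have hunitS : IsUnit (((charmatrix (-S)).map φ).det) := by
    rw [_root_.det_map']
    refine isUnit_iff_ne_zero.mpr fun hz => hS₁ ?_
    apply hinj
    rw [hz, map_zero]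
  have hunitT : IsUnit (((charmatrix (-T)).map φ).det) := by
    rw [_root_.det_map']
    refine isUnit_iff_ne_zero.mpr fun hz => hT₁ ?_
    apply hinj
    rw [hz, map_zero]
  have hRlevel : (fromBlocks (charmatrix (-S)) (vecMulVec (ψ ∘ u) (ψ ∘ v))
        (vecMulVec (ψ ∘ w) (ψ ∘ x)) (charmatrix (-T))).det
      = (charmatrix (-S)).det * (charmatrix (-T)).det
        - ((ψ ∘ x) ⬝ᵥ adjugate (charmatrix (-S)) *ᵥ (ψ ∘ u))
          * ((ψ ∘ v) ⬝ᵥ adjugate (charmatrix (-T)) *ᵥ (ψ ∘ w)) := by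
    apply hinj
    rw [← _root_.det_map', Matrix.fromBlocks_map, map_vecMulVec, map_vecMulVec,
      det_fromBlocks_rankOne_of_isUnit _ _ _ _ _ _ hunitS hunitT,
      map_sub, _root_.map_mul, _root_.map_mul, ← _root_.det_map', ← _root_.det_map',
      scalar_map_helper, scalar_map_helper]
  have hev := congrArg (Polynomial.evalRingHom (0 : K)) hRlevel
  rw [← _root_.det_map' (Polynomial.evalRingHom (0 : K)), map_sub, _root_.map_mul,
    ← _root_.det_map' (Polynomial.evalRingHom (0 : K)), ← _root_.det_map' (Polynomial.evalRingHom (0 : K)),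
    _root_.map_mul, scalar_map_helper, scalar_map_helper, Matrix.fromBlocks_map,
    map_vecMulVec, map_vecMulVec] at hev
  have hSev : (charmatrix (-S)).map (Polynomial.evalRingHom (0 : K)) = S := by
    ext i j
    simp only [Matrix.map_apply, charmatrix_apply, Matrix.diagonal_apply,
      Matrix.neg_apply, Polynomial.coe_evalRingHom, Polynomial.eval_sub,
      Polynomial.eval_C, map_sub]
    split <;> simp
  have hTev : (charmatrix (-T)).map (Polynomial.evalRingHom (0 : K)) = T := by
    ext i j
    simp only [Matrix.map_apply, charmatrix_apply, Matrix.diagonal_apply,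
      Matrix.neg_apply, Polynomial.coe_evalRingHom, Polynomial.eval_sub,
      Polynomial.eval_C, map_sub]
    split <;> simp
  have hcompm : ∀ p : m → K, ⇑(Polynomial.evalRingHom (0 : K)) ∘ (⇑ψ ∘ p) = p := by
    intro p; funext i; simp [ψ, Polynomial.coe_evalRingHom]
  have hcompn : ∀ p : n → K, ⇑(Polynomial.evalRingHom (0 : K)) ∘ (⇑ψ ∘ p) = p := by
    intro p; funext i; simp [ψ, Polynomial.coe_evalRingHom]
  rw [hSev, hTev, hcompm u, hcompm x, hcompn v, hcompn w] at hev
  exact hev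

/-- Flipping the sign of the skew top-left block of a block matrix with
rank-one skew-compatible off-diagonal blocks does not change the determinant. -/
lemma det_flip_block {m n K : Type*} [Fintype m] [DecidableEq m]
    [Fintype n] [DecidableEq n] [Field K] (hchar : (2 : K) ≠ 0)
    (S : Matrix m m K) (T : Matrix n n K) (hS : Sᵀ = -S)
    (u : m → K) (v : n → K) :
    (fromBlocks (-S) (vecMulVec u v) (vecMulVec (-v) u) T).det
      = (fromBlocks S (vecMulVec u v) (vecMulVec (-v) u) T).det := by
  rw [det_fromBlocks_rankOne, det_fromBlocks_rankOne]
  have hadjneg : adjugate (-S) = (-1 : K) ^ (Fintype.card m - 1) • adjugate S := by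
    rw [show (-S) = (-1 : K) • S by simp, adjugate_smul]
  have hTneg : v ⬝ᵥ adjugate T *ᵥ (-v) = -(v ⬝ᵥ adjugate T *ᵥ v) := by
    rw [show (-v) = (-1 : K) • v by simp, Matrix.mulVec_smul, dotProduct_smul]
    simp
  rcases Nat.even_or_odd (Fintype.card m) with he | ho
  · -- even case: the quadratic term vanishes
    have hq : u ⬝ᵥ adjugate S *ᵥ u = 0 := by
      rcases Nat.eq_zero_or_pos (Fintype.card m) with h0 | hpos
      · have : IsEmpty m := Fintype.card_eq_zero_iff.mp h0
        simp [dotProduct]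
      · have hodd : Odd (Fintype.card m - 1) := by
          rcases he with ⟨k, hk⟩
          refine ⟨k - 1, ?_⟩
          omega
        have hskewadj : (adjugate S)ᵀ = -(adjugate S) := by
          rw [adjugate_transpose, hS, show (-S) = (-1 : K) • S by simp, adjugate_smul,
            hodd.neg_one_pow]
          simp
        exact skew_quad_zero hchar (adjugate S) hskewadj u
    have hqneg : u ⬝ᵥ adjugate (-S) *ᵥ u = 0 := by
      rw [hadjneg, Matrix.smul_mulVec, dotProduct_smul, hq, smul_zero]
    rw [hq, hqneg, Matrix.det_neg, he.neg_one_pow]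
    ring
  · -- odd case: both determinants of the diagonal block vanish
    have hdS : S.det = 0 := skew_det_zero_of_odd hchar S hS ho
    have hdnS : (-S).det = 0 := by rw [Matrix.det_neg, hdS]; ring
    have heven : Even (Fintype.card m - 1) := by
      rcases ho with ⟨k, hk⟩
      exact ⟨k, by omega⟩
    have hadj : adjugate (-S) = adjugate S := by
      rw [hadjneg, heven.neg_one_pow, one_smul]
    rw [hdS, hdnS, hadj]

end Aux

theorem flip_hlclan_same_minors {V K : Type*} [Fintype V] [DecidableEq V] [Field K]
    (hchar : (2 : K) ≠ 0)
    (A B : Matrix V V K) (hskew : Aᵀ = -A)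
    (X : Finset V) (hX : IsHLClan A X)
    (hX2 : 2 ≤ X.card) (hX3 : X.card ≤ Fintype.card V - 2)
    (hB : ∀ i j : V, B i j = if i ∈ X ∧ j ∈ X then -A i j else A i j) :
    ∀ Y : Finset V, pminor A Y = pminor B Y := by
  classical
  have hsk : ∀ i j : V, A j i = -A i j := by
    intro i j
    have := congrFun (congrFun hskew i) j
    simpa [Matrix.transpose_apply] using this
  obtain ⟨U, W, hUW⟩ := rank_le_one_exists _ hX.1
  set u₀ : V → K := fun i => if h : i ∈ X then U ⟨i, h⟩ else 0 with hu₀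
  set v₀ : V → K := fun j => if h : j ∈ Xᶜ then W ⟨j, h⟩ else 0 with hv₀
  have hA_off : ∀ i j : V, i ∈ X → j ∉ X → A i j = u₀ i * v₀ j := by
    intro i j hi hj
    have hj' : j ∈ Xᶜ := Finset.mem_compl.mpr hj
    have := hUW ⟨i, hi⟩ ⟨j, hj'⟩
    simp only [Matrix.submatrix_apply] at this
    simp only [hu₀, hv₀]
    rw [dif_pos hi, dif_pos hj']
    exact this
  intro Y
  set ι := {a // a ∈ Y} with hι
  let p : ι → Prop := fun a => (a : V) ∈ X
  have : DecidablePred p := fun a => inferInstanceAs (Decidable ((a : V) ∈ X))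
  let e : {x : ι // p x} ⊕ {x : ι // ¬ p x} ≃ ι := Equiv.sumCompl p
  let f₁ : {x : ι // p x} → V := fun a => (a : ι)
  let f₂ : {x : ι // ¬ p x} → V := fun b => (b : ι)
  let SA : Matrix _ _ K := A.submatrix f₁ f₁
  let TA : Matrix _ _ K := A.submatrix f₂ f₂
  let uS : {x : ι // p x} → K := fun a => u₀ (f₁ a)
  let vS : {x : ι // ¬ p x} → K := fun b => v₀ (f₂ b)
  have hf₁ : ∀ a : {x : ι // p x}, f₁ a ∈ X := fun a => a.2
  have hf₂ : ∀ b : {x : ι // ¬ p x}, f₂ b ∉ X := fun b => b.2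
  have hSAskew : SAᵀ = -SA := by
    ext a b
    simp [SA, Matrix.transpose_apply, Matrix.submatrix_apply, hsk (f₁ b) (f₁ a)]
  have hdetA : pminor A Y
      = (fromBlocks SA (vecMulVec uS vS) (vecMulVec (-vS) uS) TA).det := by
    rw [pminor, ← Matrix.det_submatrix_equiv_self e]
    congr 1
    ext i j
    cases i with
    | inl a =>
      cases j with
      | inl b => simp [e, SA, f₁, Matrix.submatrix_apply]
      | inr b =>
        simp only [Matrix.submatrix_apply, e, Equiv.sumCompl_apply_inl,
          Equiv.sumCompl_apply_inr, fromBlocks_apply₁₂, vecMulVec_apply]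
        exact hA_off _ _ (hf₁ a) (hf₂ b)
    | inr a =>
      cases j with
      | inl b =>
        simp only [Matrix.submatrix_apply, e, Equiv.sumCompl_apply_inl,
          Equiv.sumCompl_apply_inr, fromBlocks_apply₂₁, vecMulVec_apply, Pi.neg_apply]
        rw [hsk (f₁ b) (f₂ a), hA_off _ _ (hf₁ b) (hf₂ a)]
        ring
      | inr b => simp [e, TA, f₂, Matrix.submatrix_apply]
  have hdetB : pminor B Y
      = (fromBlocks (-SA) (vecMulVec uS vS) (vecMulVec (-vS) uS) TA).det := by
    rw [pminor, ← Matrix.det_submatrix_equiv_self e]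
    congr 1
    ext i j
    cases i with
    | inl a =>
      cases j with
      | inl b =>
        simp only [Matrix.submatrix_apply, e, Equiv.sumCompl_apply_inl,
          fromBlocks_apply₁₁, Matrix.neg_apply]
        rw [hB]
        simp [SA, Matrix.submatrix_apply, f₁, show ((a : ι) : V) ∈ X from hf₁ a,
          show ((b : ι) : V) ∈ X from hf₁ b]
      | inr b =>
        simp only [Matrix.submatrix_apply, e, Equiv.sumCompl_apply_inl,
          Equiv.sumCompl_apply_inr, fromBlocks_apply₁₂, vecMulVec_apply]
        rw [hB]
        simp only [show ((b : ι) : V) ∉ X from hf₂ b, and_false, if_false]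
        exact hA_off _ _ (hf₁ a) (hf₂ b)
    | inr a =>
      cases j with
      | inl b =>
        simp only [Matrix.submatrix_apply, e, Equiv.sumCompl_apply_inl,
          Equiv.sumCompl_apply_inr, fromBlocks_apply₂₁, vecMulVec_apply, Pi.neg_apply]
        rw [hB]
        simp only [show ((a : ι) : V) ∉ X from hf₂ a, false_and, if_false]
        rw [hsk (f₁ b) (f₂ a), hA_off _ _ (hf₁ b) (hf₂ a)]
        ring
      | inr b =>
        simp only [Matrix.submatrix_apply, e, Equiv.sumCompl_apply_inr,
          fromBlocks_apply₂₂]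
        rw [hB]
        simp only [show ((a : ι) : V) ∉ X from hf₂ a, false_and, if_false]
        simp [TA, f₂, Matrix.submatrix_apply]
  rw [hdetA, hdetB, det_flip_block hchar SA TA hSAskew uS vS]
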